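/- Let α > 0, c₁ < 0, and c₂ ≥ 0 be real numbers with 1 + 2 c₁ α > 0. Let f : ℝ → ℝ be differentiable at every r ≥ 1, with f(r) ≥ 0 and f(r) ≤ c₁ · r · f'(r) + c₂ · r^{-2α} for all r ≥ 1. Then there exists a constant K ≥ 0 such that f(r) ≤ K · r^{m} for all r ≥ 1, where m = max(1/c₁, -2α). -/

import Mathlib

/-- Real-variable decay lemma: a nonnegative function satisfying
`f(r) ≤ c₁ r f'(r) + c₂ r^{-2α}` with `c₁ < 0` and `1 + 2c₁α > 0` decays like
`r^{max(1/c₁, -2α)}`. -/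
theorem decay_from_differential_inequality_with_source (α c₁ c₂ : ℝ)
    (hα : 0 < α) (hc₁ : c₁ < 0) (hc₂ : 0 ≤ c₂) (hpos : 0 < 1 + 2 * c₁ * α)
    (f : ℝ → ℝ)
    (hdiff : ∀ r : ℝ, 1 ≤ r → DifferentiableAt ℝ f r)
    (hnonneg : ∀ r : ℝ, 1 ≤ r → 0 ≤ f r)
    (hineq : ∀ r : ℝ, 1 ≤ r → f r ≤ c₁ * r * deriv f r + c₂ * r ^ (-2 * α)) :
    ∃ K : ℝ, 0 ≤ K ∧ ∀ r : ℝ, 1 ≤ r → f r ≤ K * r ^ (max (1 / c₁) (-2 * α)) := by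
  set c₃ : ℝ := c₂ / (1 + 2 * c₁ * α) with hc₃def
  have hc₃0 : 0 ≤ c₃ := div_nonneg hc₂ hpos.le
  have hc₃eq : c₃ * (1 + 2 * c₁ * α) = c₂ := div_mul_cancel₀ _ hpos.ne'
  have hbneg : 1 / c₁ < 0 := div_neg_of_pos_of_neg one_pos hc₁
  set b : ℝ := -(1 / c₁) with hbdef
  have hb0 : 0 < b := by simp [hbdef]; linarith
  set g : ℝ → ℝ := fun r => f r - c₃ * r ^ (-2 * α) with hgdef
  set φ : ℝ → ℝ := fun r => g r * r ^ b with hφdef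
  -- derivative of g
  have hgderiv : ∀ r : ℝ, 1 ≤ r →
      HasDerivAt g (deriv f r - c₃ * (-2 * α * r ^ (-2 * α - 1))) r := by
    intro r hr
    have hr0 : (0:ℝ) < r := lt_of_lt_of_le one_pos hr
    exact ((hdiff r hr).hasDerivAt).sub
      (((Real.hasDerivAt_rpow_const (Or.inl hr0.ne')).const_mul c₃))
  have hφderiv : ∀ r : ℝ, 1 ≤ r →
      HasDerivAt φ ((deriv f r - c₃ * (-2 * α * r ^ (-2 * α - 1))) * r ^ b
        + g r * (b * r ^ (b - 1))) r := by
    intro r hr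
    have hr0 : (0:ℝ) < r := lt_of_lt_of_le one_pos hr
    exact (hgderiv r hr).mul (Real.hasDerivAt_rpow_const (Or.inl hr0.ne'))
  -- φ is antitone on [1, ∞)
  have hanti : AntitoneOn φ (Set.Ici (1:ℝ)) := by
    have hint : interior (Set.Ici (1:ℝ)) = Set.Ioi 1 := interior_Ici
    apply antitoneOn_of_deriv_nonpos (convex_Ici 1)
    · intro r hr
      exact ((hφderiv r hr).continuousAt).continuousWithinAt
    · intro r hr
      rw [hint] at hr
      exact ((hφderiv r hr.le).differentiableAt).differentiableWithinAt
    · intro r hr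
      rw [hint] at hr
      have hr1 : (1:ℝ) ≤ r := hr.le
      have hr0 : (0:ℝ) < r := lt_trans one_pos hr
      rw [(hφderiv r hr1).deriv]
      -- key differential inequality: g r ≤ c₁ * r * (deriv of g)
      have hrpow : r ^ (-2 * α - 1) * r = r ^ (-2 * α) := by
        rw [← Real.rpow_add_one hr0.ne']
        norm_num
      have hkey : g r ≤ c₁ * r * (deriv f r - c₃ * (-2 * α * r ^ (-2 * α - 1))) := by
        have h1 := hineq r hr1
        have : c₁ * r * (deriv f r - c₃ * (-2 * α * r ^ (-2 * α - 1)))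
            = c₁ * r * deriv f r + 2 * α * c₁ * c₃ * (r ^ (-2 * α - 1) * r) := by ring
        rw [this, hrpow]
        have hc : c₂ - c₃ = 2 * α * c₁ * c₃ := by linarith [hc₃eq]
        have hce : c₂ * r ^ (-2 * α) = c₃ * r ^ (-2 * α)
            + 2 * α * c₁ * c₃ * r ^ (-2 * α) := by
          rw [show c₂ = c₃ + 2 * α * c₁ * c₃ from by linarith]; ring
        simp only [hgdef]
        linarith [h1, hce]
      -- divide by c₁ < 0
      have hdiv : r * (deriv f r - c₃ * (-2 * α * r ^ (-2 * α - 1))) ≤ g r / c₁ := by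
        rw [le_div_iff_of_neg hc₁]
        calc g r ≤ c₁ * r * (deriv f r - c₃ * (-2 * α * r ^ (-2 * α - 1))) := hkey
          _ = r * (deriv f r - c₃ * (-2 * α * r ^ (-2 * α - 1))) * c₁ := by ring
      have hrb1 : 0 < r ^ (b - 1) := Real.rpow_pos_of_pos hr0 _
      have hrb : r ^ b = r ^ (b - 1) * r := by
        conv_rhs => rw [← Real.rpow_add_one hr0.ne']
        norm_num
      have : (deriv f r - c₃ * (-2 * α * r ^ (-2 * α - 1))) * r ^ b
          + g r * (b * r ^ (b - 1))
          = r ^ (b - 1) * (r * (deriv f r - c₃ * (-2 * α * r ^ (-2 * α - 1)))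
              + b * g r) := by
        rw [hrb]; ring
      rw [this]
      apply mul_nonpos_of_nonneg_of_nonpos hrb1.le
      have : b * g r = -(g r / c₁) := by
        rw [hbdef]; field_simp
      rw [this]
      linarith [hdiv]
  -- conclude
  refine ⟨c₃ + max (g 1) 0, by positivity, ?_⟩
  intro r hr
  have hr0 : (0:ℝ) < r := lt_of_lt_of_le one_pos hr
  have hφle : φ r ≤ φ 1 := hanti Set.self_mem_Ici hr hr
  have hφ1 : φ 1 = g 1 := by simp [hφdef]
  have hrbpos : 0 < r ^ b := Real.rpow_pos_of_pos hr0 _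
  have hgle : g r ≤ g 1 * r ^ (1 / c₁) := by
    have h1 : g r * r ^ b ≤ g 1 := by rw [← hφ1]; exact hφle
    have h2 : r ^ (1 / c₁) * r ^ b = 1 := by
      rw [← Real.rpow_add hr0]
      simp [hbdef]
    rw [← mul_le_mul_iff_of_pos_right hrbpos]
    calc g r * r ^ b ≤ g 1 := h1
      _ = g 1 * r ^ (1 / c₁) * r ^ b := by rw [mul_assoc, h2, mul_one]
  have hm1 : r ^ (1 / c₁) ≤ r ^ (max (1 / c₁) (-2 * α)) :=
    Real.rpow_le_rpow_of_exponent_le hr (le_max_left _ _)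
  have hm2 : r ^ (-2 * α) ≤ r ^ (max (1 / c₁) (-2 * α)) :=
    Real.rpow_le_rpow_of_exponent_le hr (le_max_right _ _)
  have hfr : f r = g r + c₃ * r ^ (-2 * α) := by simp [hgdef]
  have hrpowpos : 0 < r ^ (1 / c₁) := Real.rpow_pos_of_pos hr0 _
  have hg1 : g 1 * r ^ (1 / c₁) ≤ max (g 1) 0 * r ^ (max (1 / c₁) (-2 * α)) := by
    calc g 1 * r ^ (1 / c₁) ≤ max (g 1) 0 * r ^ (1 / c₁) := by
          apply mul_le_mul_of_nonneg_right (le_max_left _ _) hrpowpos.le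
      _ ≤ max (g 1) 0 * r ^ (max (1 / c₁) (-2 * α)) :=
          mul_le_mul_of_nonneg_left hm1 (le_max_right _ _)
  calc f r = g r + c₃ * r ^ (-2 * α) := hfr
    _ ≤ g 1 * r ^ (1 / c₁) + c₃ * r ^ (max (1 / c₁) (-2 * α)) := by
        have := mul_le_mul_of_nonneg_left hm2 hc₃0
        linarith [hgle]
    _ ≤ max (g 1) 0 * r ^ (max (1 / c₁) (-2 * α)) + c₃ * r ^ (max (1 / c₁) (-2 * α)) := by
        linarith [hg1]
    _ = (c₃ + max (g 1) 0) * r ^ (max (1 / c₁) (-2 * α)) := by ring
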